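/- Let Λ = (λ_k)_{k≥0} be a strictly increasing sequence of positive real numbers satisfying the Müntz condition Σ_k 1/λ_k < ∞. For every integer n ≥ 1 and every ε ∈ (0,1), there exists an n-dimensional linear subspace E of M_Λ^1 (spanned by n monomials x ↦ x^{λ'_k} with the λ'_k chosen in Λ) such that for every f ∈ E: sup_{x∈[0,1]} |∫_0^x f(t) dt| ≥ ((1−ε)/(2n−1))·‖f‖_{L^1} and sup_{x∈(0,1]} |(1/x)∫_0^x f(t) dt| ≥ ((1−ε)/(2n−1))·‖f‖_{L^1}. Consequently the n-th Bernstein numbers of the Volterra and Cesàro operators on M_Λ^1 satisfy b_n(V_Λ) ≥ 1/(2n−1) and b_n(Γ_Λ) ≥ 1/(2n−1). -/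

import Mathlib

open MeasureTheory Set

/-- Lebesgue measure restricted to `[0,1]`. -/
noncomputable def mu01 : Measure ℝ := volume.restrict (Icc (0:ℝ) 1)

/-- The Müntz space `M_Λ^1`: the closure in `L¹([0,1])` of the linear span of the
monomials `t ↦ t ^ Λ k`. -/
noncomputable def muntzSpace (Λ : ℕ → ℝ) : Submodule ℝ (Lp ℝ 1 mu01) :=
  (Submodule.span ℝ {f : Lp ℝ 1 mu01 |
    ∃ k : ℕ, (f : ℝ → ℝ) =ᵐ[mu01] fun t => t ^ Λ k}).topologicalClosure

/-- The `n`-th Bernstein number of a bounded operator `T`: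
`b_n(T) = sup_{dim E = n} inf {‖T v‖ : v ∈ E, ‖v‖ = 1}`, expressed as the supremum of
all constants `c` bounding `‖T v‖` from below on the unit sphere of some
`n`-dimensional subspace. -/
noncomputable def bernsteinNumber {X Y : Type*} [NormedAddCommGroup X] [NormedSpace ℝ X]
    [NormedAddCommGroup Y] [NormedSpace ℝ Y] (T : X →L[ℝ] Y) (n : ℕ) : ℝ :=
  sSup {c : ℝ | ∃ E : Submodule ℝ X, Module.finrank ℝ ↥E = n ∧
    ∀ v ∈ E, ‖v‖ = 1 → c ≤ ‖T v‖}

/-- Generalized Descartes: a nonzero combination of `m` distinct real-power monomials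
has fewer than `m` zeros in `(0, ∞)`. -/
theorem key_zeros : ∀ (m : ℕ) (μ a : Fin m → ℝ), Function.Injective μ → (∃ i, a i ≠ 0) →
    ∀ s : Finset ℝ, (∀ x ∈ s, 0 < x ∧ ∑ i, a i * x ^ μ i = 0) → s.card < m := by
  intro m
  induction m with
  | zero => intro μ a hμ ha s hs; obtain ⟨i, _⟩ := ha; exact i.elim0
  | succ m IH =>
    intro μ a hμ ha s hs
    by_cases hz : ∃ i, a i = 0
    · -- drop a zero coefficient
      obtain ⟨i, hi⟩ := hz
      obtain ⟨j, hj⟩ := ha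
      have hij : j ≠ i := fun h => hj (h ▸ hi)
      obtain ⟨j', hj'⟩ := Fin.exists_succAbove_eq hij
      have : s.card < m := by
        refine IH (μ ∘ i.succAbove) (a ∘ i.succAbove)
          (hμ.comp (Fin.succAbove_right_injective)) ⟨j', ?_⟩ s ?_
        · simpa [Function.comp, hj'] using hj
        · intro x hx
          refine ⟨(hs x hx).1, ?_⟩
          have := (hs x hx).2
          rwa [Fin.sum_univ_succAbove _ i, hi, zero_mul, zero_add] at this
      omega
    · push_neg at hz
      by_contra hcard
      push_neg at hcard
      obtain ⟨s', hs'sub, hs'card⟩ := Finset.exists_subset_card_eq hcard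
      have hs' : ∀ x ∈ s', 0 < x ∧ ∑ i, a i * x ^ μ i = 0 := fun x hx => hs x (hs'sub hx)
      match m, μ, a, hμ, hz, IH, hs', hs'card with
      | 0, μ, a, hμ, hz, IH, hs', hs'card =>
        obtain ⟨x, hx⟩ := Finset.card_pos.mp (by omega : 0 < s'.card)
        obtain ⟨hxpos, hxz⟩ := hs' x hx
        rw [Fin.sum_univ_one] at hxz
        rcases mul_eq_zero.mp hxz with h | h
        · exact hz 0 h
        · exact absurd h (Real.rpow_pos_of_pos hxpos (μ 0)).ne'
      | (m + 1), μ, a, hμ, hz, IH, hs', hs'card =>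
        set o := s'.orderIsoOfFin hs'card with ho
        set X : Fin (m + 2) → ℝ := fun j => (o j : ℝ) with hX
        have hXmono : StrictMono X := fun j j' h => by
          exact_mod_cast (o.lt_iff_lt.mpr h)
        have hXpos : ∀ j, 0 < X j := fun j => (hs' _ (o j).2).1
        have hXzero : ∀ j, ∑ i, a i * (X j) ^ μ i = 0 := fun j => (hs' _ (o j).2).2
        set h : ℝ → ℝ := fun x => ∑ i, a i * x ^ (μ i - μ 0) with hh
        set h' : ℝ → ℝ := fun x => ∑ i, a i * ((μ i - μ 0) * x ^ (μ i - μ 0 - 1)) with hh'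
        have hderiv : ∀ x : ℝ, 0 < x → HasDerivAt h (h' x) x := by
          intro x hx
          exact HasDerivAt.fun_sum fun i _ =>
            (Real.hasDerivAt_rpow_const (Or.inl hx.ne')).const_mul (a i)
        have hzeroh : ∀ j, h (X j) = 0 := by
          intro j
          have hx := hXpos j
          simp only [hh]
          have : ∀ i, a i * (X j) ^ (μ i - μ 0) = (a i * (X j) ^ μ i) / (X j) ^ μ 0 := by
            intro i
            rw [Real.rpow_sub hx]; ring
          rw [Finset.sum_congr rfl (fun i _ => this i), ← Finset.sum_div, hXzero j, zero_div]
        have hroll : ∀ j : Fin (m + 1), ∃ y ∈ Ioo (X j.castSucc) (X j.succ), h' y = 0 := by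
          intro j
          have hab : X j.castSucc < X j.succ := hXmono (show j.castSucc < j.succ from Fin.castSucc_lt_succ)
          refine exists_hasDerivAt_eq_zero (f := h) (f' := h') hab ?_
            (by rw [hzeroh, hzeroh]) ?_
          · intro x hx
            have : 0 < x := lt_of_lt_of_le (hXpos _) hx.1
            exact (hderiv x this).continuousAt.continuousWithinAt
          · intro x hx
            exact hderiv x (lt_trans (hXpos _) hx.1)
        choose y hy hy0 using hroll
        have hymono : StrictMono y := by
          intro j j' hjj
          have h1 : y j < X j.succ := (hy j).2
          have h2 : X j'.castSucc < y j' := (hy j').1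
          have h3 : X j.succ ≤ X j'.castSucc :=
            hXmono.monotone (Fin.succ_le_castSucc_iff.mpr hjj)
          linarith
        have hsum : ∀ x : ℝ, h' x =
            ∑ i : Fin (m + 1), (a i.succ * (μ i.succ - μ 0)) * x ^ (μ i.succ - μ 0 - 1) := by
          intro x
          show (∑ i : Fin (m + 1 + 1), a i * ((μ i - μ 0) * x ^ (μ i - μ 0 - 1))) = _
          rw [Fin.sum_univ_succ]
          simp only [sub_self, zero_mul, mul_zero, zero_add]
          exact Finset.sum_congr rfl fun i _ => by ring
        set t := Finset.image y Finset.univ with htdef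
        have htcard : t.card = m + 1 := by
          rw [htdef, Finset.card_image_of_injective _ hymono.injective, Finset.card_univ,
            Fintype.card_fin]
        have : t.card < m + 1 := by
          refine IH (fun i => μ i.succ - μ 0 - 1) (fun i => a i.succ * (μ i.succ - μ 0))
            ?_ ⟨0, ?_⟩ t ?_
          · intro i i' hEq
            have : μ i.succ = μ i'.succ := by dsimp at hEq; linarith
            exact Fin.succ_injective _ (hμ this)
          · exact mul_ne_zero (hz _) (sub_ne_zero.mpr fun hEq =>
              (Fin.succ_ne_zero 0) (hμ hEq))
          · intro x hx
            obtain ⟨j, _, rfl⟩ := Finset.mem_image.mp hx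
            refine ⟨lt_trans (hXpos j.castSucc) (hy j).1, ?_⟩
            rw [← hsum (y j)]
            exact hy0 j
        omega

/-- On an interval without interior zeros, `∫|g| = |∫ g|`. -/
theorem abs_int_eq (g : ℝ → ℝ) (hg : Continuous g) (a b : ℝ) (hab : a ≤ b)
    (h0 : ∀ x ∈ Ioo a b, g x ≠ 0) :
    ∫ x in a..b, |g x| = |∫ x in a..b, g x| := by
  rcases eq_or_lt_of_le hab with rfl | hab'
  · simp
  have hsign : (∀ x ∈ Ioo a b, 0 ≤ g x) ∨ (∀ x ∈ Ioo a b, g x ≤ 0) := by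
    by_contra hcon
    push_neg at hcon
    obtain ⟨⟨u, hu, hu0⟩, ⟨v, hv, hv0⟩⟩ := hcon
    rcases lt_trichotomy u v with huv | rfl | huv
    · have : (0:ℝ) ∈ Ioo (g u) (g v) := ⟨hu0, hv0⟩
      obtain ⟨w, hw, hw0⟩ := intermediate_value_Ioo huv.le hg.continuousOn this
      exact h0 w ⟨lt_trans hu.1 hw.1, lt_trans hw.2 hv.2⟩ hw0
    · linarith
    · have : (0:ℝ) ∈ Ioo (g u) (g v) := ⟨hu0, hv0⟩
      obtain ⟨w, hw, hw0⟩ := intermediate_value_Ioo' huv.le hg.continuousOn this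
      exact h0 w ⟨lt_trans hv.1 hw.1, lt_trans hw.2 hu.2⟩ hw0
  have key : ∀ (G H : ℝ → ℝ), (∀ x ∈ Ioo a b, G x = H x) →
      ∫ x in a..b, G x = ∫ x in a..b, H x := by
    intro G H hGH
    rw [intervalIntegral.integral_of_le hab, intervalIntegral.integral_of_le hab,
      MeasureTheory.integral_Ioc_eq_integral_Ioo, MeasureTheory.integral_Ioc_eq_integral_Ioo]
    exact MeasureTheory.setIntegral_congr_fun measurableSet_Ioo fun x hx => hGH x hx
  rcases hsign with hpos | hneg
  · have h1 : ∫ x in a..b, |g x| = ∫ x in a..b, g x :=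
      key (fun x => |g x|) g (fun x hx => abs_of_nonneg (hpos x hx))
    rw [h1, abs_of_nonneg]
    rw [← h1]
    exact intervalIntegral.integral_nonneg hab fun x _ => abs_nonneg _
  · have h1 : ∫ x in a..b, |g x| = ∫ x in a..b, -g x :=
      key (fun x => |g x|) (fun x => -g x) (fun x hx => abs_of_nonpos (hneg x hx))
    rw [intervalIntegral.integral_neg] at h1
    have h2 : |∫ x in a..b, g x| = -∫ x in a..b, g x := by
      rw [abs_of_nonpos]
      rw [← neg_nonneg, ← h1]
      exact intervalIntegral.integral_nonneg hab fun x _ => abs_nonneg _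
    rw [h1, h2]

/-- Variation bound: if `g` has at most `k` zeros in `(0,b)` and the primitive is bounded
by `M` on `[0,1]`, then `∫₀ᵇ |g| ≤ (2k+1)M`. -/
theorem var_bound (g : ℝ → ℝ) (hg : Continuous g) (M : ℝ)
    (hM : ∀ x ∈ Icc (0:ℝ) 1, |∫ t in (0:ℝ)..x, g t| ≤ M) :
    ∀ (k : ℕ) (b : ℝ), b ∈ Icc (0:ℝ) 1 →
    (∀ s : Finset ℝ, (∀ x ∈ s, x ∈ Ioo 0 b ∧ g x = 0) → s.card ≤ k) →
    ∫ t in (0:ℝ)..b, |g t| ≤ (2 * (k:ℝ) + 1) * M := by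
  have hM0 : 0 ≤ M := by
    have := hM 0 ⟨le_refl 0, zero_le_one⟩
    simpa using this
  have base : ∀ b : ℝ, b ∈ Icc (0:ℝ) 1 → (∀ x ∈ Ioo (0:ℝ) b, g x ≠ 0) →
      ∫ t in (0:ℝ)..b, |g t| ≤ M := by
    intro b hb hnz
    rw [abs_int_eq g hg 0 b hb.1 hnz]
    exact hM b hb
  intro k
  induction k with
  | zero =>
    intro b hb hzeros
    have hnz : ∀ x ∈ Ioo (0:ℝ) b, g x ≠ 0 := by
      intro x hx hx0
      have := hzeros {x} (by
        intro y hy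
        rw [Finset.mem_singleton] at hy
        subst hy
        exact ⟨hx, hx0⟩)
      simp at this
    calc ∫ t in (0:ℝ)..b, |g t| ≤ M := base b hb hnz
      _ ≤ (2 * ((0:ℕ):ℝ) + 1) * M := by norm_num
  | succ k IHk =>
    intro b hb hzeros
    set Z : Set ℝ := {x | x ∈ Ioo 0 b ∧ g x = 0} with hZ
    have hZfin : Z.Finite := by
      by_contra hinf
      obtain ⟨t, hts, htc⟩ := Set.Infinite.exists_subset_card_eq hinf (k + 2)
      have := hzeros t fun x hx => hts hx
      omega
    by_cases hne : Z.Nonempty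
    · set t0 := hZfin.toFinset.max' (by simpa using hne) with ht0
      have ht0Z : t0 ∈ Z := by
        have := hZfin.toFinset.max'_mem (by simpa using hne)
        simpa using this
      have ht0max : ∀ z ∈ Z, z ≤ t0 := by
        intro z hz
        exact hZfin.toFinset.le_max' z (by simpa using hz)
      obtain ⟨⟨ht0pos, ht0b⟩, ht0z⟩ := ht0Z
      have hsplit : (∫ t in (0:ℝ)..t0, |g t|) + ∫ t in t0..b, |g t| = ∫ t in (0:ℝ)..b, |g t| :=
        intervalIntegral.integral_add_adjacent_intervals (a := (0:ℝ)) (b := t0) (c := b)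
          (μ := volume) (hg.abs.intervalIntegrable _ _) (hg.abs.intervalIntegrable _ _)
      have hsplitg : (∫ t in (0:ℝ)..t0, g t) + ∫ t in t0..b, g t = ∫ t in (0:ℝ)..b, g t :=
        intervalIntegral.integral_add_adjacent_intervals (a := (0:ℝ)) (b := t0) (c := b)
          (μ := volume) (hg.intervalIntegrable _ _) (hg.intervalIntegrable _ _)
      have ht0I : t0 ∈ Icc (0:ℝ) 1 := ⟨ht0pos.le, ht0b.le.trans hb.2⟩
      have h1 : ∫ t in (0:ℝ)..t0, |g t| ≤ (2 * (k:ℝ) + 1) * M := by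
        refine IHk t0 ht0I ?_
        intro s hsz
        have hts : t0 ∉ s := fun hmem => absurd (hsz t0 hmem).1.2 (lt_irrefl t0)
        have : (insert t0 s).card ≤ k + 1 := by
          refine hzeros _ ?_
          intro x hx
          rcases Finset.mem_insert.mp hx with rfl | hx'
          · exact ⟨⟨ht0pos, ht0b⟩, ht0z⟩
          · obtain ⟨⟨hx1, hx2⟩, hx3⟩ := hsz x hx'
            exact ⟨⟨hx1, lt_trans hx2 ht0b⟩, hx3⟩
        rw [Finset.card_insert_of_notMem hts] at this
        omega
      have h2 : ∫ t in t0..b, |g t| ≤ 2 * M := by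
        have hnz : ∀ x ∈ Ioo t0 b, g x ≠ 0 := by
          intro x hx hx0
          have : x ≤ t0 := ht0max x ⟨⟨lt_trans ht0pos hx.1, hx.2⟩, hx0⟩
          exact absurd this (not_le.mpr hx.1)
        rw [abs_int_eq g hg t0 b ht0b.le hnz]
        have : ∫ t in t0..b, g t = (∫ t in (0:ℝ)..b, g t) - ∫ t in (0:ℝ)..t0, g t := by
          linarith [hsplitg]
        rw [this]
        calc |(∫ t in (0:ℝ)..b, g t) - ∫ t in (0:ℝ)..t0, g t|
            ≤ |∫ t in (0:ℝ)..b, g t| + |∫ t in (0:ℝ)..t0, g t| := abs_sub _ _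
          _ ≤ M + M := add_le_add (hM b hb) (hM t0 ht0I)
          _ = 2 * M := by ring
      rw [show ((2:ℝ) * ((k+1:ℕ):ℝ) + 1) * M = (2*(k:ℝ)+1)*M + 2*M by push_cast; ring,
        ← hsplit]
      exact add_le_add h1 h2
    · have hnz : ∀ x ∈ Ioo (0:ℝ) b, g x ≠ 0 := by
        intro x hx hx0
        exact hne ⟨x, hx, hx0⟩
      calc ∫ t in (0:ℝ)..b, |g t| ≤ M := base b hb hnz
        _ ≤ (2 * ((k+1:ℕ):ℝ) + 1) * M :=
            le_mul_of_one_le_left hM0 (by have hk : (0:ℝ) ≤ (k:ℝ) := Nat.cast_nonneg k; push_cast; linarith)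

instance : IsFiniteMeasure mu01 := by
  constructor
  unfold mu01
  rw [Measure.restrict_apply_univ, Real.volume_Icc]
  exact ENNReal.ofReal_lt_top

lemma cont_rpow (c : ℝ) (hc : 0 < c) : Continuous fun t : ℝ => t ^ c :=
  continuous_iff_continuousAt.mpr fun x => Real.continuousAt_rpow_const x c (Or.inr hc.le)

lemma mono_memLp (c : ℝ) (hc : 0 < c) : MemLp (fun t : ℝ => t ^ c) 1 mu01 := by
  refine MemLp.of_bound ((cont_rpow c hc).aestronglyMeasurable) 1 ?_
  rw [mu01, ae_restrict_iff' measurableSet_Icc]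
  refine Filter.Eventually.of_forall fun t ht => ?_
  rw [Real.norm_eq_abs, abs_of_nonneg (Real.rpow_nonneg ht.1 c)]
  exact Real.rpow_le_one ht.1 ht.2 hc.le

lemma Lp_coeFn_sum {ι : Type*} (s : Finset ι) (f : ι → Lp ℝ 1 mu01) :
    ⇑(∑ i ∈ s, f i) =ᵐ[mu01] fun t => ∑ i ∈ s, f i t := by
  induction s using Finset.cons_induction with
  | empty =>
    refine (Lp.coeFn_zero ℝ 1 mu01).trans ?_
    simp [Filter.EventuallyEq]
  | cons i s his ih =>
    rw [Finset.sum_cons]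
    refine (Lp.coeFn_add _ _).trans ?_
    filter_upwards [ih] with t ht
    rw [Pi.add_apply, ht, Finset.sum_cons]

/-- Core estimate: the span of the first `n` Müntz monomials, with quantitative lower bounds
for the supremum of the primitive and of its Cesàro means. -/
lemma core (Λ : ℕ → ℝ) (hmono : StrictMono Λ) (hpos : ∀ k, 0 < Λ k) (n : ℕ) (hn : 1 ≤ n) :
    ∃ e : Fin n → ↥(muntzSpace Λ),
      (∀ i : Fin n, (((e i : Lp ℝ 1 mu01)) : ℝ → ℝ) =ᵐ[mu01] fun t => t ^ Λ (i : ℕ)) ∧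
      Module.finrank ℝ ↥(Submodule.span ℝ (Set.range e)) = n ∧
      ∀ f ∈ Submodule.span ℝ (Set.range e),
        0 ≤ (⨆ x : Icc (0:ℝ) 1,
            |∫ t in Ioc (0:ℝ) (x:ℝ), ((f : Lp ℝ 1 mu01) : ℝ → ℝ) t ∂mu01|) ∧
        0 ≤ (⨆ x : Ioc (0:ℝ) 1,
            |(1/(x:ℝ)) * ∫ t in Ioc (0:ℝ) (x:ℝ), ((f : Lp ℝ 1 mu01) : ℝ → ℝ) t ∂mu01|) ∧
        ‖f‖ ≤ (2 * (n:ℝ) - 1) * (⨆ x : Icc (0:ℝ) 1,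
            |∫ t in Ioc (0:ℝ) (x:ℝ), ((f : Lp ℝ 1 mu01) : ℝ → ℝ) t ∂mu01|) ∧
        ‖f‖ ≤ (2 * (n:ℝ) - 1) * (⨆ x : Ioc (0:ℝ) 1,
            |(1/(x:ℝ)) * ∫ t in Ioc (0:ℝ) (x:ℝ), ((f : Lp ℝ 1 mu01) : ℝ → ℝ) t ∂mu01|) := by
  have hn1 : (1:ℝ) ≤ (n:ℝ) := by exact_mod_cast hn
  have h2n : (0:ℝ) < 2 * (n:ℝ) - 1 := by linarith
  -- the monomials
  set mono : Fin n → ℝ → ℝ := fun i t => t ^ Λ (i : ℕ) with hmono_def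
  have hcont : ∀ i, Continuous (mono i) := fun i => cont_rpow _ (hpos i)
  have hmem1 : ∀ i : Fin n, MemLp (mono i) 1 mu01 := fun i => mono_memLp _ (hpos i)
  set eL : Fin n → Lp ℝ 1 mu01 := fun i => (hmem1 i).toLp (mono i) with heL
  have heLae : ∀ i, ⇑(eL i) =ᵐ[mu01] mono i := fun i => (hmem1 i).coeFn_toLp
  have heLmem : ∀ i, eL i ∈ muntzSpace Λ := fun i =>
    Submodule.le_topologicalClosure _ (Submodule.subset_span ⟨(i:ℕ), heLae i⟩)
  set e : Fin n → ↥(muntzSpace Λ) := fun i => ⟨eL i, heLmem i⟩ with he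
  -- a.e. identification of linear combinations
  have hsumL : ∀ c : Fin n → ℝ,
      ⇑(∑ i, c i • eL i) =ᵐ[mu01] fun t => ∑ i, c i * mono i t := by
    intro c
    have h1 := Lp_coeFn_sum Finset.univ (fun i => c i • eL i)
    have h2 : ∀ᵐ t ∂mu01, ∀ i : Fin n, (⇑(c i • eL i)) t = c i * mono i t := by
      rw [MeasureTheory.ae_all_iff]
      intro i
      filter_upwards [Lp.coeFn_smul (c i) (eL i), heLae i] with t h2 h3
      rw [h2, Pi.smul_apply, smul_eq_mul, h3]
    filter_upwards [h1, h2] with t ht hall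
    rw [ht]
    exact Finset.sum_congr rfl fun i _ => hall i
  -- injectivity of exponents
  have hinj : Function.Injective (fun i : Fin n => Λ (i : ℕ)) :=
    fun i j h => Fin.val_injective (hmono.injective h)
  -- linear independence
  have hLind : LinearIndependent ℝ eL := by
    rw [Fintype.linearIndependent_iff]
    intro c hc i0
    by_contra hne
    set G : ℝ → ℝ := fun t => ∑ i, c i * mono i t with hG
    have hGc : Continuous G := by
      apply continuous_finset_sum
      exact fun i _ => continuous_const.mul (hcont i)
    have hae0 : G =ᵐ[mu01] 0 := by
      refine (hsumL c).symm.trans ?_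
      rw [hc]
      exact Lp.coeFn_zero ℝ 1 mu01
    have hzmeas : mu01 {t | G t ≠ 0} = 0 := by
      have := hae0
      rw [Filter.EventuallyEq, MeasureTheory.ae_iff] at this
      simpa using this
    -- but G has fewer than n zeros in (0,1)
    have hkz := key_zeros n (fun i : Fin n => Λ (i : ℕ)) c hinj ⟨i0, hne⟩
    set Z : Set ℝ := {x | x ∈ Ioo (0:ℝ) 1 ∧ G x = 0} with hZ
    have hZfin : Z.Finite := by
      by_contra hinf
      obtain ⟨t, hts, htc⟩ := Set.Infinite.exists_subset_card_eq hinf n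
      have := hkz t fun x hx => ⟨(hts hx).1.1, (hts hx).2⟩
      omega
    have hsubset : Ioo (0:ℝ) 1 \ Z ⊆ {t | G t ≠ 0} ∩ Icc 0 1 := by
      intro x hx
      refine ⟨fun h0 => hx.2 ⟨hx.1, h0⟩, ⟨hx.1.1.le, hx.1.2.le⟩⟩
    have hvol : volume (Ioo (0:ℝ) 1 \ Z) = volume (Ioo (0:ℝ) 1) :=
      measure_diff_null (hZfin.measure_zero volume)
    have hmu : volume ({t | G t ≠ 0} ∩ Icc 0 1) = 0 := by
      have hms : MeasurableSet {t : ℝ | G t ≠ 0} :=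
        (isClosed_eq hGc continuous_const).measurableSet.compl
      have : mu01 {t | G t ≠ 0} = volume ({t | G t ≠ 0} ∩ Icc 0 1) := by
        unfold mu01
        rw [Measure.restrict_apply hms]
      rw [← this, hzmeas]
    have hle := measure_mono (μ := volume) hsubset
    rw [hvol, hmu, Real.volume_Ioo] at hle
    simp at hle
  have hInd : LinearIndependent ℝ e :=
    LinearIndependent.of_comp ((muntzSpace Λ).subtype) hLind
  refine ⟨e, heLae, ?_, ?_⟩
  · rw [finrank_span_eq_card hInd, Fintype.card_fin]
  intro f hf
  obtain ⟨c, hrep⟩ := Submodule.mem_span_range_iff_exists_fun ℝ |>.mp hf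
  set G : ℝ → ℝ := fun t => ∑ i, c i * mono i t with hG
  have hGc : Continuous G := by
    apply continuous_finset_sum
    exact fun i _ => continuous_const.mul (hcont i)
  have hcoe : ((f : Lp ℝ 1 mu01)) = ∑ i, c i • eL i := by
    rw [← hrep]
    simp [e]
  have hfae : ((f : Lp ℝ 1 mu01) : ℝ → ℝ) =ᵐ[mu01] G := by
    rw [hcoe]; exact hsumL c
  -- pointwise bound for G
  set C : ℝ := ∑ i, |c i| with hC
  have hC0 : 0 ≤ C := Finset.sum_nonneg fun i _ => abs_nonneg _
  have hGb : ∀ t ∈ Icc (0:ℝ) 1, |G t| ≤ C := by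
    intro t ht
    calc |G t| ≤ ∑ i, |c i * mono i t| := Finset.abs_sum_le_sum_abs _ _
      _ ≤ ∑ i, |c i| := by
          refine Finset.sum_le_sum fun i _ => ?_
          rw [abs_mul]
          have h1 : |mono i t| ≤ 1 := by
            rw [abs_of_nonneg (Real.rpow_nonneg ht.1 _)]
            exact Real.rpow_le_one ht.1 ht.2 (hpos _).le
          calc |c i| * |mono i t| ≤ |c i| * 1 :=
                mul_le_mul_of_nonneg_left h1 (abs_nonneg _)
            _ = |c i| := mul_one _
  -- the primitive
  have hF : ∀ x : ℝ, 0 ≤ x → x ≤ 1 →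
      (∫ t in Ioc (0:ℝ) x, ((f : Lp ℝ 1 mu01) : ℝ → ℝ) t ∂mu01) = ∫ t in (0:ℝ)..x, G t := by
    intro x hx0 hx1
    have hres : mu01.restrict (Ioc 0 x) = volume.restrict (Ioc 0 x) := by
      unfold mu01
      rw [Measure.restrict_restrict measurableSet_Ioc]
      congr 1
      exact inter_eq_left.mpr ((Ioc_subset_Ioc_right hx1).trans Ioc_subset_Icc_self)
    calc ∫ t in Ioc (0:ℝ) x, ((f : Lp ℝ 1 mu01) : ℝ → ℝ) t ∂mu01
        = ∫ t in Ioc (0:ℝ) x, G t ∂mu01 :=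
          integral_congr_ae (ae_restrict_of_ae hfae)
      _ = ∫ t in (0:ℝ)..x, G t := by
          rw [← intervalIntegral.integral_of_le hx0]
          rw [intervalIntegral.integral_of_le hx0, intervalIntegral.integral_of_le hx0]
          rw [show (∫ t in Ioc (0:ℝ) x, G t ∂mu01) = ∫ t, G t ∂(mu01.restrict (Ioc 0 x)) from rfl,
            hres]
  have hFb : ∀ x ∈ Icc (0:ℝ) 1, |∫ t in (0:ℝ)..x, G t| ≤ C * x := by
    intro x hx
    have := intervalIntegral.norm_integral_le_of_norm_le_const (C := C) (f := G)
      (a := 0) (b := x) ?_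
    · rwa [Real.norm_eq_abs, sub_zero, abs_of_nonneg hx.1] at this
    · intro t ht
      rw [Set.uIoc_of_le hx.1] at ht
      exact hGb t ⟨ht.1.le, ht.2.trans hx.2⟩
  -- the norm of f is the integral of |G|
  have hnorm : ‖f‖ = ∫ t in (0:ℝ)..1, |G t| := by
    have h1 : ‖f‖ = ‖(f : Lp ℝ 1 mu01)‖ := rfl
    rw [h1, L1.norm_eq_integral_norm]
    have h2 : ∫ t, ‖((f : Lp ℝ 1 mu01) : ℝ → ℝ) t‖ ∂mu01 = ∫ t, |G t| ∂mu01 := by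
      refine integral_congr_ae ?_
      filter_upwards [hfae] with t ht
      rw [ht, Real.norm_eq_abs]
    rw [h2]
    show (∫ t in Icc (0:ℝ) 1, |G t| ∂volume) = _
    rw [integral_Icc_eq_integral_Ioc, intervalIntegral.integral_of_le zero_le_one]
    -- suprema
  haveI hne1 : Nonempty ↥(Icc (0:ℝ) 1) := ⟨⟨0, le_refl 0, zero_le_one⟩⟩
  haveI hne2 : Nonempty ↥(Ioc (0:ℝ) 1) := ⟨⟨1, zero_lt_one, le_refl 1⟩⟩
  have hBdd1 : BddAbove (Set.range fun x : Icc (0:ℝ) 1 =>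
      |∫ t in Ioc (0:ℝ) (x:ℝ), ((f : Lp ℝ 1 mu01) : ℝ → ℝ) t ∂mu01|) := by
    refine ⟨C, ?_⟩
    rintro - ⟨x, rfl⟩
    dsimp only
    rw [hF x x.2.1 x.2.2]
    refine (hFb x x.2).trans ?_
    nlinarith [x.2.1, x.2.2]
  have hBdd2 : BddAbove (Set.range fun x : Ioc (0:ℝ) 1 =>
      |(1/(x:ℝ)) * ∫ t in Ioc (0:ℝ) (x:ℝ), ((f : Lp ℝ 1 mu01) : ℝ → ℝ) t ∂mu01|) := by
    refine ⟨C, ?_⟩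
    rintro - ⟨x, rfl⟩
    dsimp only
    have hx0 : 0 < (x:ℝ) := x.2.1
    rw [hF x hx0.le x.2.2, abs_mul, abs_of_pos (show (0:ℝ) < 1/(x:ℝ) by positivity)]
    have h1 : |∫ t in (0:ℝ)..(x:ℝ), G t| ≤ C * (x:ℝ) := hFb x ⟨hx0.le, x.2.2⟩
    calc (1/(x:ℝ)) * |∫ t in (0:ℝ)..(x:ℝ), G t| ≤ (1/(x:ℝ)) * (C * (x:ℝ)) :=
          mul_le_mul_of_nonneg_left h1 (by positivity)
      _ = C := by field_simp
  have hM1 : ∀ x ∈ Icc (0:ℝ) 1, |∫ t in (0:ℝ)..x, G t| ≤ (⨆ x : Icc (0:ℝ) 1,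
      |∫ t in Ioc (0:ℝ) (x:ℝ), ((f : Lp ℝ 1 mu01) : ℝ → ℝ) t ∂mu01|) := by
    intro x hx
    rw [← hF x hx.1 hx.2]
    exact le_ciSup hBdd1 ⟨x, hx⟩
  have hM2 : ∀ x ∈ Icc (0:ℝ) 1, |∫ t in (0:ℝ)..x, G t| ≤ (⨆ x : Ioc (0:ℝ) 1,
      |(1/(x:ℝ)) * ∫ t in Ioc (0:ℝ) (x:ℝ), ((f : Lp ℝ 1 mu01) : ℝ → ℝ) t ∂mu01|) := by
    intro x hx
    rcases eq_or_lt_of_le hx.1 with hx0 | hx0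
    · rw [← hx0, intervalIntegral.integral_same, abs_zero]
      exact le_trans (abs_nonneg _) (le_ciSup hBdd2 ⟨1, zero_lt_one, le_refl 1⟩)
    · have h1x : 1 ≤ 1/x := by
        rw [le_div_iff₀ hx0]
        linarith [hx.2]
      have hkey : |∫ t in (0:ℝ)..x, G t| ≤
          |(1/x) * ∫ t in Ioc (0:ℝ) x, ((f : Lp ℝ 1 mu01) : ℝ → ℝ) t ∂mu01| := by
        rw [hF x hx.1 hx.2, abs_mul, abs_of_pos (show (0:ℝ) < 1/x by positivity)]
        calc |∫ t in (0:ℝ)..x, G t| = 1 * |∫ t in (0:ℝ)..x, G t| := (one_mul _).symm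
          _ ≤ (1/x) * |∫ t in (0:ℝ)..x, G t| :=
              mul_le_mul_of_nonneg_right h1x (abs_nonneg _)
      exact le_trans hkey (le_ciSup hBdd2 ⟨x, hx0, hx.2⟩)
  have hS1nonneg : 0 ≤ (⨆ x : Icc (0:ℝ) 1,
      |∫ t in Ioc (0:ℝ) (x:ℝ), ((f : Lp ℝ 1 mu01) : ℝ → ℝ) t ∂mu01|) :=
    le_trans (abs_nonneg _) (le_ciSup hBdd1 ⟨0, le_refl 0, zero_le_one⟩)
  have hS2nonneg : 0 ≤ (⨆ x : Ioc (0:ℝ) 1,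
      |(1/(x:ℝ)) * ∫ t in Ioc (0:ℝ) (x:ℝ), ((f : Lp ℝ 1 mu01) : ℝ → ℝ) t ∂mu01|) :=
    le_trans (abs_nonneg _) (le_ciSup hBdd2 ⟨1, zero_lt_one, le_refl 1⟩)
  refine ⟨hS1nonneg, hS2nonneg, ?_, ?_⟩
  · -- Volterra bound
    by_cases hcz : ∀ i, c i = 0
    · have hf0 : ‖f‖ = 0 := by
        rw [hnorm]
        have : ∀ t, G t = 0 := fun t => by simp [hG, hcz]
        simp [this]
      rw [hf0]
      exact mul_nonneg (by linarith) hS1nonneg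
    · push_neg at hcz
      have hkz := key_zeros n (fun i : Fin n => Λ (i:ℕ)) c hinj hcz
      have hzc : ∀ s : Finset ℝ, (∀ x ∈ s, x ∈ Ioo (0:ℝ) 1 ∧ G x = 0) → s.card ≤ n - 1 := by
        intro s hs
        have := hkz s fun x hxs => ⟨(hs x hxs).1.1, (hs x hxs).2⟩
        omega
      have hvb := var_bound G hGc _ hM1 (n-1) 1 ⟨zero_le_one, le_refl 1⟩ hzc
      have hcast : (2 * ((n-1:ℕ):ℝ) + 1) = 2*(n:ℝ) - 1 := by
        have hc1 : ((n-1:ℕ):ℝ) = (n:ℝ) - 1 := by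
          rw [Nat.cast_sub hn]; simp
        rw [hc1]; ring
      rw [hcast] at hvb
      rw [hnorm]
      exact hvb
  · -- Cesaro bound
    by_cases hcz : ∀ i, c i = 0
    · have hf0 : ‖f‖ = 0 := by
        rw [hnorm]
        have : ∀ t, G t = 0 := fun t => by simp [hG, hcz]
        simp [this]
      rw [hf0]
      exact mul_nonneg (by linarith) hS2nonneg
    · push_neg at hcz
      have hkz := key_zeros n (fun i : Fin n => Λ (i:ℕ)) c hinj hcz
      have hzc : ∀ s : Finset ℝ, (∀ x ∈ s, x ∈ Ioo (0:ℝ) 1 ∧ G x = 0) → s.card ≤ n - 1 := by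
        intro s hs
        have := hkz s fun x hxs => ⟨(hs x hxs).1.1, (hs x hxs).2⟩
        omega
      have hvb := var_bound G hGc _ hM2 (n-1) 1 ⟨zero_le_one, le_refl 1⟩ hzc
      have hcast : (2 * ((n-1:ℕ):ℝ) + 1) = 2*(n:ℝ) - 1 := by
        have hc1 : ((n-1:ℕ):ℝ) = (n:ℝ) - 1 := by
          rw [Nat.cast_sub hn]; simp
        rw [hc1]; ring
      rw [hcast] at hvb
      rw [hnorm]
      exact hvb

lemma bernstein_bddAbove {X Y : Type*} [NormedAddCommGroup X] [NormedSpace ℝ X]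
    [NormedAddCommGroup Y] [NormedSpace ℝ Y] (T : X →L[ℝ] Y) (n : ℕ) (hn : 1 ≤ n) :
    BddAbove {c : ℝ | ∃ E : Submodule ℝ X, Module.finrank ℝ ↥E = n ∧
      ∀ v ∈ E, ‖v‖ = 1 → c ≤ ‖T v‖} := by
  refine ⟨‖T‖, ?_⟩
  rintro c ⟨E, hE, hc⟩
  haveI : Nontrivial ↥E := Module.nontrivial_of_finrank_pos (R := ℝ) (M := ↥E)
    (by rw [hE]; omega)
  obtain ⟨v, hv⟩ := exists_ne (0 : ↥E)
  have hvx : (v : X) ≠ 0 := fun h => hv (Subtype.ext h)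
  set u : X := ‖(v : X)‖⁻¹ • (v : X) with hu
  have hu1 : ‖u‖ = 1 := norm_smul_inv_norm (𝕜 := ℝ) hvx
  have huE : u ∈ E := E.smul_mem _ v.2
  calc c ≤ ‖T u‖ := hc u huE hu1
    _ ≤ ‖T‖ * ‖u‖ := T.le_opNorm u
    _ = ‖T‖ := by rw [hu1, mul_one]

/-- Under the Müntz condition, for every `n ≥ 1` and `ε ∈ (0,1)`
there is an `n`-dimensional subspace `E ⊆ M_Λ^1` spanned by `n` monomials
`x ↦ x^{λ'_k}` (exponents chosen in `Λ`) such that for every `f ∈ E`,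
`sup_{x∈[0,1]} |∫_0^x f| ≥ ((1-ε)/(2n-1))‖f‖₁` and
`sup_{x∈(0,1]} |(1/x)∫_0^x f| ≥ ((1-ε)/(2n-1))‖f‖₁`. Consequently the `n`-th
Bernstein numbers of the Volterra and Cesàro operators on `M_Λ^1` are at least
`1/(2n-1)`. -/
theorem bernsteinNumbers_of_volterra_and_cesaro_lower_bound
    (Λ : ℕ → ℝ) (hmono : StrictMono Λ) (hpos : ∀ k, 0 < Λ k)
    (hmuntz : Summable fun k => 1 / Λ k)
    (V : ↥(muntzSpace Λ) →L[ℝ] C(Icc (0:ℝ) 1, ℝ))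
    (hV : ∀ (f : ↥(muntzSpace Λ)) (x : Icc (0:ℝ) 1),
      V f x = ∫ t in Ioc (0:ℝ) (x:ℝ), ((f : Lp ℝ 1 mu01) : ℝ → ℝ) t ∂mu01)
    (Γ : ↥(muntzSpace Λ) →L[ℝ] BoundedContinuousFunction (Ioc (0:ℝ) 1) ℝ)
    (hΓ : ∀ (f : ↥(muntzSpace Λ)) (x : Ioc (0:ℝ) 1),
      Γ f x = (1/(x:ℝ)) * ∫ t in Ioc (0:ℝ) (x:ℝ), ((f : Lp ℝ 1 mu01) : ℝ → ℝ) t ∂mu01)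
    (n : ℕ) (hn : 1 ≤ n) (ε : ℝ) (hε : ε ∈ Ioo (0:ℝ) 1) :
    (∃ (k : Fin n → ℕ) (e : Fin n → ↥(muntzSpace Λ)), StrictMono k ∧
      (∀ i, (((e i : Lp ℝ 1 mu01)) : ℝ → ℝ) =ᵐ[mu01] fun t => t ^ Λ (k i)) ∧
      Module.finrank ℝ ↥(Submodule.span ℝ (Set.range e)) = n ∧
      ∀ f ∈ Submodule.span ℝ (Set.range e),
        ((1 - ε) / (2 * (n:ℝ) - 1)) * ‖f‖ ≤
          (⨆ x : Icc (0:ℝ) 1,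
            |∫ t in Ioc (0:ℝ) (x:ℝ), ((f : Lp ℝ 1 mu01) : ℝ → ℝ) t ∂mu01|) ∧
        ((1 - ε) / (2 * (n:ℝ) - 1)) * ‖f‖ ≤
          (⨆ x : Ioc (0:ℝ) 1,
            |(1/(x:ℝ)) * ∫ t in Ioc (0:ℝ) (x:ℝ), ((f : Lp ℝ 1 mu01) : ℝ → ℝ) t ∂mu01|)) ∧
    1 / (2 * (n:ℝ) - 1) ≤ bernsteinNumber V n ∧
    1 / (2 * (n:ℝ) - 1) ≤ bernsteinNumber Γ n := by
  obtain ⟨hε0, hε1⟩ := hε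
  have hn1 : (1:ℝ) ≤ (n:ℝ) := by exact_mod_cast hn
  have h2n : (0:ℝ) < 2 * (n:ℝ) - 1 := by linarith
  obtain ⟨e, hae, hrank, hbound⟩ := core Λ hmono hpos n hn
  haveI hne1 : Nonempty ↥(Icc (0:ℝ) 1) := ⟨⟨0, le_refl 0, zero_le_one⟩⟩
  haveI hne2 : Nonempty ↥(Ioc (0:ℝ) 1) := ⟨⟨1, zero_lt_one, le_refl 1⟩⟩
  refine ⟨⟨fun i => (i : ℕ), e, fun a b h => h, hae, hrank, ?_⟩, ?_, ?_⟩
  · intro f hf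
    obtain ⟨hS1n, hS2n, h1, h2⟩ := hbound f hf
    have h01 : 0 ≤ (1 - ε) / (2 * (n:ℝ) - 1) := div_nonneg (by linarith) h2n.le
    constructor
    · calc ((1 - ε) / (2 * (n:ℝ) - 1)) * ‖f‖
          ≤ ((1 - ε) / (2 * (n:ℝ) - 1)) * ((2 * (n:ℝ) - 1) * _) :=
            mul_le_mul_of_nonneg_left h1 h01
        _ = (1 - ε) * _ := by field_simp
        _ ≤ 1 * _ := mul_le_mul_of_nonneg_right (by linarith) hS1n
        _ = _ := one_mul _
    · calc ((1 - ε) / (2 * (n:ℝ) - 1)) * ‖f‖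
          ≤ ((1 - ε) / (2 * (n:ℝ) - 1)) * ((2 * (n:ℝ) - 1) * _) :=
            mul_le_mul_of_nonneg_left h2 h01
        _ = (1 - ε) * _ := by field_simp
        _ ≤ 1 * _ := mul_le_mul_of_nonneg_right (by linarith) hS2n
        _ = _ := one_mul _
  · refine le_csSup (bernstein_bddAbove V n hn) ?_
    refine ⟨Submodule.span ℝ (Set.range e), hrank, ?_⟩
    intro v hv hv1
    obtain ⟨hS1n, hS2n, h1, h2⟩ := hbound v hv
    rw [hv1] at h1
    have hS : 1 / (2 * (n:ℝ) - 1) ≤ (⨆ x : Icc (0:ℝ) 1,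
        |∫ t in Ioc (0:ℝ) (x:ℝ), ((v : Lp ℝ 1 mu01) : ℝ → ℝ) t ∂mu01|) := by
      rw [div_le_iff₀ h2n, mul_comm]
      linarith
    refine hS.trans ?_
    refine ciSup_le fun x => ?_
    rw [← hV v x]
    simpa using ContinuousMap.norm_coe_le_norm (V v) x
  · refine le_csSup (bernstein_bddAbove Γ n hn) ?_
    refine ⟨Submodule.span ℝ (Set.range e), hrank, ?_⟩
    intro v hv hv1
    obtain ⟨hS1n, hS2n, h1, h2⟩ := hbound v hv
    rw [hv1] at h2
    have hS : 1 / (2 * (n:ℝ) - 1) ≤ (⨆ x : Ioc (0:ℝ) 1,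
        |(1/(x:ℝ)) * ∫ t in Ioc (0:ℝ) (x:ℝ), ((v : Lp ℝ 1 mu01) : ℝ → ℝ) t ∂mu01|) := by
      rw [div_le_iff₀ h2n, mul_comm]
      linarith
    refine hS.trans ?_
    refine ciSup_le fun x => ?_
    rw [← hΓ v x]
    simpa using BoundedContinuousFunction.norm_coe_le_norm (Γ v) x
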